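/- Let A, B be bounded operators on a complex Hilbert space with AB = λBA ≠ 0 for a complex scalar λ. If A is hyponormal and invertible and B is quasi *-paranormal, then |λ| = 1. -/

import Mathlib

open scoped InnerProductSpace

lemma quasi_star_paranormal_not_nilpotent
    {H : Type*} [NormedAddCommGroup H] [InnerProductSpace ℂ H] [CompleteSpace H]
    (B : H →L[ℂ] H)
    (hB : ∀ x : H, ‖(ContinuousLinearMap.adjoint B) (B x)‖ ^ 2 ≤ ‖(B ^ 3) x‖ * ‖B x‖)
    (hBne : B ≠ 0) : ∀ n : ℕ, B ^ (n + 1) ≠ 0 := by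
  have key : ∀ m : ℕ, B ^ (m + 3) = 0 → B ^ (m + 1) = 0 := by
    intro m hm
    ext z
    have hadj : ContinuousLinearMap.adjoint B (B ((B ^ m) z)) = 0 := by
      have h3 : (B ^ 3) ((B ^ m) z) = 0 := by
        have e : (B ^ 3) ((B ^ m) z) = (B ^ (m + 3)) z := by
          rw [add_comm, pow_add]; rfl
        rw [e, hm]; rfl
      have h := hB ((B ^ m) z)
      rw [h3] at h
      simp only [norm_zero, zero_mul] at h
      have h0 : ‖ContinuousLinearMap.adjoint B (B ((B ^ m) z))‖ = 0 := by
        nlinarith [norm_nonneg (ContinuousLinearMap.adjoint B (B ((B ^ m) z)))]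
      exact norm_eq_zero.mp h0
    have heq : (B ^ (m + 1)) z = B ((B ^ m) z) := by
      rw [pow_succ']; rfl
    have hz : ⟪(B ^ (m + 1)) z, (B ^ (m + 1)) z⟫_ℂ = 0 := by
      nth_rewrite 2 [heq]
      rw [← ContinuousLinearMap.adjoint_inner_left, heq, hadj]
      simp
    simpa using inner_self_eq_zero.mp hz
  have main : ∀ n : ℕ, B ^ (n + 1) = 0 → B = 0 := by
    intro n
    induction n using Nat.strong_induction_on with
    | _ n ih =>
      match n with
      | 0 => intro h; simpa using h
      | 1 =>
        intro h
        have h3 : B ^ 3 = 0 := by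
          have e : B ^ 3 = B ^ 2 * B := by rw [pow_succ]
          rw [e, h, zero_mul]
        simpa using key 0 h3
      | (k + 2) =>
        intro h
        exact ih k (by omega) (key k h)
  intro n hn
  exact hBne (main n hn)

theorem lambda_commute_hyponormal_invertible
    {H : Type*} [NormedAddCommGroup H] [InnerProductSpace ℂ H] [CompleteSpace H]
    (A B : H →L[ℂ] H) (lam : ℂ)
    (hcomm : A * B = lam • (B * A)) (hne : A * B ≠ 0)
    (hA : ∀ x : H, ‖(ContinuousLinearMap.adjoint A) x‖ ≤ ‖A x‖)
    (hAinv : IsUnit A)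
    (hB : ∀ x : H, ‖(ContinuousLinearMap.adjoint B) (B x)‖ ^ 2 ≤ ‖(B ^ 3) x‖ * ‖B x‖) :
    ‖lam‖ = 1 := by
  obtain ⟨u, hu⟩ := hAinv
  set A' : H →L[ℂ] H := ↑u⁻¹ with hA'def
  have h1 : A' * A = 1 := by rw [← hu]; exact u.inv_mul
  have h2 : A * A' = 1 := by rw [← hu]; exact u.mul_inv
  have hlam : lam ≠ 0 := by
    rintro rfl
    rw [zero_smul] at hcomm
    exact hne hcomm
  have hBne : B ≠ 0 := by
    rintro rfl
    rw [mul_zero] at hne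
    exact hne rfl
  have hBpow := quasi_star_paranormal_not_nilpotent B hB hBne
  have hBsim : B = lam • (A' * B * A) := by
    have e : A' * (A * B) = A' * (lam • (B * A)) := by rw [hcomm]
    calc B = (A' * A) * B := by rw [h1, one_mul]
    _ = lam • (A' * B * A) := by
        rw [mul_assoc, e, mul_smul_comm, mul_assoc]
  have hsim : ∀ n : ℕ, B ^ n = lam ^ n • (A' * B ^ n * A) := by
    intro n
    induction n with
    | zero => simp [h1]
    | succ n ihn =>
      calc B ^ (n + 1) = B ^ n * B := pow_succ B n
      _ = (lam ^ n • (A' * B ^ n * A)) * (lam • (A' * B * A)) := by rw [← ihn, ← hBsim]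
      _ = (lam ^ n * lam) • ((A' * B ^ n * A) * (A' * B * A)) := by
          rw [smul_mul_smul]
      _ = lam ^ (n + 1) • (A' * B ^ (n + 1) * A) := by
          rw [← pow_succ]
          congr 1
          calc (A' * B ^ n * A) * (A' * B * A)
              = A' * B ^ n * ((A * A') * (B * A)) := by
                simp only [mul_assoc]
          _ = A' * (B ^ n * B) * A := by rw [h2, one_mul]; simp only [mul_assoc]
          _ = A' * B ^ (n + 1) * A := by rw [← pow_succ]
  set c : ℝ := ‖A‖ * ‖A'‖ with hcdef
  set t : ℝ := ‖lam‖ with htdef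
  have ht0 : 0 < t := norm_pos_iff.mpr hlam
  have hBnorm : ∀ n : ℕ, 0 < ‖B ^ (n + 1)‖ := fun n => norm_pos_iff.mpr (hBpow n)
  -- upper bound : t^(n+1) ≤ c
  have hub : ∀ n : ℕ, t ^ (n + 1) ≤ c := by
    intro n
    have hrev : A * B ^ (n + 1) * A' = lam ^ (n + 1) • B ^ (n + 1) := by
      calc A * B ^ (n + 1) * A'
          = A * (lam ^ (n + 1) • (A' * B ^ (n + 1) * A)) * A' := by rw [← hsim]
      _ = lam ^ (n + 1) • (A * (A' * B ^ (n + 1) * A) * A') := by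
          rw [mul_smul_comm, smul_mul_assoc]
      _ = lam ^ (n + 1) • B ^ (n + 1) := by
          congr 1
          calc A * (A' * B ^ (n + 1) * A) * A'
              = (A * A') * (B ^ (n + 1) * (A * A')) := by simp only [mul_assoc]
          _ = B ^ (n + 1) := by rw [h2, one_mul, mul_one]
    have hnrm := congrArg norm hrev
    rw [norm_smul, norm_pow] at hnrm
    have hle : ‖A * B ^ (n + 1) * A'‖ ≤ ‖A‖ * ‖B ^ (n + 1)‖ * ‖A'‖ :=
      calc ‖A * B ^ (n + 1) * A'‖ ≤ ‖A * B ^ (n + 1)‖ * ‖A'‖ := norm_mul_le _ _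
      _ ≤ ‖A‖ * ‖B ^ (n + 1)‖ * ‖A'‖ := by
          gcongr
          exact norm_mul_le _ _
    rw [hnrm] at hle
    have hb := hBnorm n
    have : t ^ (n + 1) * ‖B ^ (n + 1)‖ ≤ (‖A‖ * ‖A'‖) * ‖B ^ (n + 1)‖ := by nlinarith
    exact le_of_mul_le_mul_right this hb
  -- lower bound : 1 ≤ t^(n+1) * c
  have hlb : ∀ n : ℕ, 1 ≤ t ^ (n + 1) * c := by
    intro n
    have hnrm := congrArg norm (hsim (n + 1))
    rw [norm_smul, norm_pow lam] at hnrm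
    have hle : ‖A' * B ^ (n + 1) * A‖ ≤ ‖A'‖ * ‖B ^ (n + 1)‖ * ‖A‖ :=
      calc ‖A' * B ^ (n + 1) * A‖ ≤ ‖A' * B ^ (n + 1)‖ * ‖A‖ := norm_mul_le _ _
      _ ≤ ‖A'‖ * ‖B ^ (n + 1)‖ * ‖A‖ := by
          gcongr
          exact norm_mul_le _ _
    have hb := hBnorm n
    have htp : (0:ℝ) ≤ t ^ (n + 1) := le_of_lt (pow_pos ht0 _)
    have : ‖B ^ (n + 1)‖ ≤ t ^ (n + 1) * (‖A'‖ * ‖B ^ (n + 1)‖ * ‖A‖) :=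
      calc ‖B ^ (n + 1)‖ = t ^ (n + 1) * ‖A' * B ^ (n + 1) * A‖ := hnrm
      _ ≤ t ^ (n + 1) * (‖A'‖ * ‖B ^ (n + 1)‖ * ‖A‖) :=
          mul_le_mul_of_nonneg_left hle htp
    have h' : 1 * ‖B ^ (n + 1)‖ ≤ (t ^ (n + 1) * c) * ‖B ^ (n + 1)‖ := by
      rw [one_mul, hcdef]
      nlinarith
    exact le_of_mul_le_mul_right h' hb
  -- conclude
  by_contra hne1
  rcases lt_or_gt_of_ne hne1 with hlt | hgt
  · -- t < 1
    have hs : 1 < 1 / t := one_lt_one_div ht0 hlt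
    obtain ⟨n, hn⟩ := pow_unbounded_of_one_lt c hs
    have hprod : t ^ n * (1 / t) ^ n = 1 := by
      rw [← mul_pow, mul_one_div_cancel (ne_of_gt ht0), one_pow]
    have htn : 0 < t ^ n := pow_pos ht0 n
    have h1' : t ^ (n + 1) * c ≤ t ^ n * c := by
      have : t ^ (n + 1) ≤ t ^ n :=
        pow_le_pow_of_le_one (le_of_lt ht0) (le_of_lt hlt) (Nat.le_succ n)
      have hc0 : 0 < c := by
        nlinarith [pow_pos ht0 (0 + 1), hlb 0]
      nlinarith
    have h2' : t ^ n * c < 1 := by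
      calc t ^ n * c < t ^ n * (1 / t) ^ n := by
            exact mul_lt_mul_of_pos_left hn htn
      _ = 1 := hprod
    have := hlb n
    linarith
  · -- t > 1
    obtain ⟨n, hn⟩ := pow_unbounded_of_one_lt c hgt
    have : t ^ n ≤ t ^ (n + 1) := pow_le_pow_right₀ (le_of_lt hgt) (Nat.le_succ n)
    have := hub n
    linarith
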